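/- (Decomposition Theorem) For every 0 ≤ k ≤ n−1 and every φ ∈ C^k_0(X,ℝ), there exist φ^k ∈ C^k_0(X,ℝ) and φ^i, (φ^i)' ∈ C^i_0(X,ℝ) for 0 ≤ i ≤ k−1 such that, setting (φ^k)' = φ: (1) for every 0 ≤ i ≤ k, ‖(φ^i)'‖² = ‖φ^i‖² + ‖φ^{i−1}‖² + ... + ‖φ^0‖²; and (2) ‖dφ‖² = Σ_{i=0}^{k} (k+1−i) ‖φ^i‖² + Σ_{i=0}^{k} Σ_{τ ∈ X(i−1)} ⟨ (M')⁺_{τ,0} (I − M⁻_{τ,0}) (φ^i)'_τ , (φ^i)'_τ ⟩. -/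

import Mathlib

/-!
Framework: a pure `n`-dimensional finite weighted simplicial complex, following
Kaufman–Oppenheim, "High Order Random Walks: Beyond Spectral Gap".

A complex is given by its finset of faces (finsets of a vertex type `V`) together with
a weight function `m`.  We index levels by **cardinality**: `X.K c` is the set of faces
with `c` elements, i.e. the set `X(k)` of `k`-dimensional faces for `k = c - 1`
(so `X(-1) = X.K 0`, and a pure `n`-dimensional complex has top level `X.K (n+1)`).
-/

noncomputable section

open Finset

/-- The data of a weighted simplicial complex: a finite family of faces and a weight. -/
structure WSC (V : Type*) [DecidableEq V] where
  faces : Finset (Finset V)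
  m : Finset V → ℝ

namespace WSC

variable {V : Type*} [DecidableEq V]

/-- `X.IsWSC n` : `X` is a pure `n`-dimensional finite weighted simplicial complex:
the faces form a nonempty downward-closed family, every face is contained in a face with
`n+1` elements (and no face has more), the weights are positive, and the weight of every
face of cardinality `≤ n` is the sum of the weights of the faces covering it. -/
def IsWSC (X : WSC V) (n : ℕ) : Prop :=
  ∅ ∈ X.faces ∧
  (∀ ⦃σ τ : Finset V⦄, σ ∈ X.faces → τ ⊆ σ → τ ∈ X.faces) ∧
  (∀ ⦃σ⦄, σ ∈ X.faces → σ.card ≤ n + 1) ∧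
  (∀ ⦃σ⦄, σ ∈ X.faces → ∃ η ∈ X.faces, σ ⊆ η ∧ η.card = n + 1) ∧
  (∀ ⦃σ⦄, σ ∈ X.faces → 0 < X.m σ) ∧
  (∀ ⦃τ⦄, τ ∈ X.faces → τ.card ≤ n →
    X.m τ = ∑ σ ∈ X.faces.filter (fun σ => τ ⊆ σ ∧ σ.card = τ.card + 1), X.m σ)

/-- `X.K c` : the faces with `c` elements, i.e. `X(c-1)` in dimension indexing. -/
def K (X : WSC V) (c : ℕ) : Finset (Finset V) := X.faces.filter (fun σ => σ.card = c)

/-- The weighted inner product on cochains supported on the faces with `c` elements. -/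
def inn (X : WSC V) (c : ℕ) (φ ψ : Finset V → ℝ) : ℝ :=
  ∑ σ ∈ X.K c, X.m σ * (φ σ * ψ σ)

/-- The squared norm of a cochain on the faces with `c` elements. -/
def normSq (X : WSC V) (c : ℕ) (φ : Finset V → ℝ) : ℝ := X.inn c φ φ

/-- The norm of a cochain on the faces with `c` elements. -/
def norm (X : WSC V) (c : ℕ) (φ : Finset V → ℝ) : ℝ := Real.sqrt (X.normSq c φ)

/-- `X.cochainZero c φ` : φ belongs to `C^{c-1}_0 (X, ℝ)`, i.e. it is orthogonal to the
constant functions at level `c`. -/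
def cochainZero (X : WSC V) (c : ℕ) (φ : Finset V → ℝ) : Prop :=
  ∑ σ ∈ X.K c, X.m σ * φ σ = 0

/-- The signless differential, from cochains at level `c` to cochains at level `c+1`:
`(d φ)(σ) = ∑_{τ ∈ X(c-1), τ ⊂ σ} φ(τ)`. -/
def d (X : WSC V) (c : ℕ) (φ : Finset V → ℝ) : Finset V → ℝ :=
  fun σ => ∑ τ ∈ (X.K c).filter (fun τ => τ ⊆ σ), φ τ

/-- The (explicit formula for the) adjoint of the signless differential, from cochains at
level `c+1` to cochains at level `c`: `(d* ψ)(τ) = ∑_{σ ⊇ τ} (m σ / m τ) ψ(σ)`. -/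
def dStar (X : WSC V) (c : ℕ) (ψ : Finset V → ℝ) : Finset V → ℝ :=
  fun τ => ∑ σ ∈ (X.K (c + 1)).filter (fun σ => τ ⊆ σ), (X.m σ / X.m τ) * ψ σ

/-- The (lazy) upper random walk operator `M⁺` on cochains at level `c`
(i.e. on `k`-cochains for `k = c-1`; note `k + 2 = c + 1`). -/
def Mup (X : WSC V) (c : ℕ) (φ : Finset V → ℝ) : Finset V → ℝ :=
  fun τ => (1 / ((c : ℝ) + 1)) * φ τ +
    ∑ τ' ∈ (X.K c).filter (fun τ' => τ ∪ τ' ∈ X.K (c + 1)),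
      (X.m (τ ∪ τ') / (((c : ℝ) + 1) * X.m τ)) * φ τ'

/-- The lower random walk operator `M⁻` on cochains at level `c`
(i.e. on `k`-cochains for `k = c-1`; note `k + 1 = c`). -/
def Mdown (X : WSC V) (c : ℕ) (φ : Finset V → ℝ) : Finset V → ℝ :=
  fun τ => (∑ η ∈ (X.K (c - 1)).filter (fun η => η ⊆ τ), X.m τ / ((c : ℝ) * X.m η)) * φ τ +
    ∑ τ' ∈ (X.K c).filter (fun τ' => τ' ≠ τ ∧ τ ∩ τ' ∈ X.K (c - 1)),
      (X.m τ' / ((c : ℝ) * X.m (τ ∩ τ'))) * φ τ'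

/-- The non-lazy upper random walk operator `(M')⁺ = ((k+2)/(k+1)) M⁺ - (1/(k+1)) I`
on cochains at level `c = k+1`. -/
def Mup' (X : WSC V) (c : ℕ) (φ : Finset V → ℝ) : Finset V → ℝ :=
  fun τ => (((c : ℝ) + 1) / (c : ℝ)) * X.Mup c φ τ - (1 / (c : ℝ)) * φ τ

/-- The link `X_τ` of a face `τ`, with the induced weight `m_τ (η) = m (τ ∪ η)`. -/
def link (X : WSC V) (τ : Finset V) : WSC V where
  faces := X.faces.filter (fun η => η ∩ τ = ∅ ∧ τ ∪ η ∈ X.faces)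
  m := fun η => X.m (τ ∪ η)

/-- The localization `φ_τ (η) = φ (τ ∪ η)` of a cochain `φ` to the link of `τ`. -/
def localize (φ : Finset V → ℝ) (τ : Finset V) : Finset V → ℝ := fun η => φ (τ ∪ η)

/-- The underlying graph (1-skeleton) of a complex. -/
def skeleton (Y : WSC V) : SimpleGraph {v : V // ({v} : Finset V) ∈ Y.faces} where
  Adj u w := u ≠ w ∧ ({(u : V), (w : V)} : Finset V) ∈ Y.faces
  symm := ⟨by
    intro u w h
    refine ⟨h.1.symm, ?_⟩
    rw [Finset.pair_comm]
    exact h.2⟩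
  loopless := ⟨by intro u h; exact h.1 rfl⟩

/-- All links of `X` of dimension `≥ 1` (including `X` itself, as the link of `∅`)
have a connected underlying graph. -/
def LinksConnected (X : WSC V) (n : ℕ) : Prop :=
  ∀ c < n, ∀ τ ∈ X.K c, (X.link τ).skeleton.Connected

/-- The second largest eigenvalue of the self-adjoint operator `(M')⁺₀` on `C⁰(Y, ℝ)`,
via its Rayleigh-quotient characterization over the orthogonal complement of the
constant functions (the top eigenfunction). -/
def secondEig (Y : WSC V) : ℝ :=
  sSup {r : ℝ | ∃ ψ : Finset V → ℝ, Y.normSq 1 ψ ≠ 0 ∧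
    (∑ v ∈ Y.K 1, Y.m v * ψ v) = 0 ∧ r = Y.inn 1 (Y.Mup' 1 ψ) ψ / Y.normSq 1 ψ}

/-- The smallest eigenvalue of the self-adjoint operator `(M')⁺₀` on `C⁰(Y, ℝ)`,
via its Rayleigh-quotient characterization. -/
def smallestEig (Y : WSC V) : ℝ :=
  sInf {r : ℝ | ∃ ψ : Finset V → ℝ, Y.normSq 1 ψ ≠ 0 ∧
    r = Y.inn 1 (Y.Mup' 1 ψ) ψ / Y.normSq 1 ψ}

/-- `μ_k = max_{τ ∈ X(k-1)} μ_τ` where `μ_τ` is the second largest eigenvalue of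
`(M')⁺_{τ,0}`; faces `τ ∈ X(k-1)` have `k` elements. -/
def mu (X : WSC V) (k : ℕ) : ℝ :=
  sSup {r : ℝ | ∃ τ ∈ X.K k, r = (X.link τ).secondEig}

/-- `ν_k = min_{τ ∈ X(k-1)} ν_τ` where `ν_τ` is the smallest eigenvalue of
`(M')⁺_{τ,0}`; faces `τ ∈ X(k-1)` have `k` elements. -/
def nu (X : WSC V) (k : ℕ) : ℝ :=
  sInf {r : ℝ | ∃ τ ∈ X.K k, r = (X.link τ).smallestEig}

/-- `X` is a one-sided `λ`-local spectral expander: `μ_k ≤ λ` for every `0 ≤ k ≤ n-1`. -/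
def OneSided (X : WSC V) (n : ℕ) (lam : ℝ) : Prop := ∀ k < n, X.mu k ≤ lam

/-- `X` is a two-sided `λ`-local spectral expander: `μ_k ≤ λ` and `ν_k ≥ -λ`
for every `0 ≤ k ≤ n-1`. -/
def TwoSided (X : WSC V) (n : ℕ) (lam : ℝ) : Prop :=
  ∀ k < n, X.mu k ≤ lam ∧ -lam ≤ X.nu k

end WSC

open WSC

/-! ### Auxiliary development for the decomposition theorem -/

namespace WSCAux

open WSC

variable {V : Type*} [DecidableEq V] {X : WSC V} {n : ℕ}

lemma mem_K {σ : Finset V} {c : ℕ} : σ ∈ X.K c ↔ σ ∈ X.faces ∧ σ.card = c :=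
  Finset.mem_filter

lemma hd_of (hX : X.IsWSC n) : ∀ ⦃σ τ : Finset V⦄, σ ∈ X.faces → τ ⊆ σ → τ ∈ X.faces :=
  hX.2.1

lemma hpos_of (hX : X.IsWSC n) : ∀ ⦃σ⦄, σ ∈ X.faces → 0 < X.m σ :=
  hX.2.2.2.2.1

lemma m_ne_zero (hX : X.IsWSC n) {c : ℕ} {τ : Finset V} (hτ : τ ∈ X.K c) : X.m τ ≠ 0 :=
  ne_of_gt (hpos_of hX (mem_K.mp hτ).1)

/-- The weight of a face is the sum of the weights of its covers. -/
lemma m_eq_sum_covers (hX : X.IsWSC n) {c : ℕ} (hc : c ≤ n) {τ : Finset V}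
    (hτ : τ ∈ X.K c) :
    X.m τ = ∑ σ ∈ (X.K (c+1)).filter (fun σ => τ ⊆ σ), X.m σ := by
  obtain ⟨hτf, hτc⟩ := mem_K.mp hτ
  rw [hX.2.2.2.2.2 hτf (hτc ▸ hc)]
  apply Finset.sum_congr _ (fun _ _ => rfl)
  ext σ
  simp only [Finset.mem_filter, K, hτc]
  tauto

/-- Exchange a double sum over a relation. -/
lemma sum_swap_rel (s t : Finset (Finset V)) (r : Finset V → Finset V → Prop)
    [DecidableRel r] (f : Finset V → Finset V → ℝ) :
    ∑ a ∈ s, ∑ b ∈ t.filter (fun b => r a b), f a b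
      = ∑ b ∈ t, ∑ a ∈ s.filter (fun a => r a b), f a b :=
  Finset.sum_comm' (by intro a b; simp only [Finset.mem_filter]; tauto)

lemma filter_subset_K (hX : X.IsWSC n) {c : ℕ} {σ : Finset V} (hσ : σ ∈ X.faces) :
    (X.K c).filter (fun τ => τ ⊆ σ) = σ.powersetCard c := by
  ext τ
  simp only [Finset.mem_filter, mem_K, Finset.mem_powersetCard]
  exact ⟨fun h => ⟨h.2, h.1.2⟩, fun h => ⟨⟨hd_of hX hσ h.1, h.2⟩, h.1⟩⟩

/-- Adjointness of `d` and `dStar`. -/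
lemma inn_d_eq (hX : X.IsWSC n) (c : ℕ) (φ χ : Finset V → ℝ) :
    X.inn (c+1) (X.d c φ) χ = X.inn c φ (X.dStar c χ) := by
  unfold inn d dStar
  simp_rw [Finset.sum_mul, Finset.mul_sum]
  rw [sum_swap_rel (X.K (c+1)) (X.K c) (fun a b => b ⊆ a)
    (fun σ τ => X.m σ * (φ τ * χ σ))]
  refine Finset.sum_congr rfl fun τ hτ => Finset.sum_congr rfl fun σ hσ => ?_
  have hm := m_ne_zero hX hτ
  field_simp

lemma sum_m_d (hX : X.IsWSC n) {c : ℕ} (hc : c ≤ n) (ψ : Finset V → ℝ) :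
    ∑ σ ∈ X.K (c+1), X.m σ * X.d c ψ σ = ∑ τ ∈ X.K c, X.m τ * ψ τ := by
  unfold d
  simp_rw [Finset.mul_sum]
  rw [sum_swap_rel (X.K (c+1)) (X.K c) (fun a b => b ⊆ a) (fun σ τ => X.m σ * ψ τ)]
  refine Finset.sum_congr rfl fun τ hτ => ?_
  rw [← Finset.sum_mul, ← m_eq_sum_covers hX hc hτ]

lemma sum_m_dStar (hX : X.IsWSC n) (c : ℕ) (χ : Finset V → ℝ) :
    ∑ τ ∈ X.K c, X.m τ * X.dStar c χ τ
      = ((c : ℝ) + 1) * ∑ σ ∈ X.K (c+1), X.m σ * χ σ := by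
  unfold dStar
  simp_rw [Finset.mul_sum]
  have h1 : ∀ τ ∈ X.K c, ∀ σ ∈ (X.K (c+1)).filter (fun σ => τ ⊆ σ),
      X.m τ * (X.m σ / X.m τ * χ σ) = X.m σ * χ σ := by
    intro τ hτ σ _
    have hm := m_ne_zero hX hτ
    field_simp
  rw [Finset.sum_congr rfl fun τ hτ => Finset.sum_congr rfl (h1 τ hτ)]
  rw [sum_swap_rel (X.K c) (X.K (c+1)) (fun a b => a ⊆ b) (fun τ σ => X.m σ * χ σ)]
  refine Finset.sum_congr rfl fun σ hσ => ?_
  rw [Finset.sum_const, filter_subset_K hX (mem_K.mp hσ).1, Finset.card_powersetCard,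
    (mem_K.mp hσ).2, Nat.choose_succ_self_right, nsmul_eq_mul]
  push_cast
  ring

lemma normSq_nonneg (hX : X.IsWSC n) (c : ℕ) (ψ : Finset V → ℝ) :
    0 ≤ X.normSq c ψ := by
  refine Finset.sum_nonneg fun σ hσ => ?_
  have := hpos_of hX (mem_K.mp hσ).1
  nlinarith [mul_self_nonneg (ψ σ)]

lemma normSq_smul (c : ℕ) (t : ℝ) (ψ : Finset V → ℝ) :
    X.normSq c (fun σ => t * ψ σ) = t^2 * X.normSq c ψ := by
  unfold normSq inn
  rw [Finset.mul_sum]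
  exact Finset.sum_congr rfl fun σ _ => by ring

lemma d_smul (c : ℕ) (t : ℝ) (ψ : Finset V → ℝ) :
    X.d c (fun σ => t * ψ σ) = fun σ => t * X.d c ψ σ := by
  funext σ
  exact (Finset.mul_sum _ _ _).symm

lemma vanish_of_normSq_eq_zero (hX : X.IsWSC n) {c : ℕ} {ψ : Finset V → ℝ}
    (h : X.normSq c ψ = 0) : ∀ σ ∈ X.K c, ψ σ = 0 := by
  intro σ hσ
  have hpos := hpos_of hX (mem_K.mp hσ).1
  have h0 : ∀ τ ∈ X.K c, 0 ≤ X.m τ * (ψ τ * ψ τ) := by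
    intro τ hτ
    have := hpos_of hX (mem_K.mp hτ).1
    nlinarith [mul_self_nonneg (ψ τ)]
  have h2 := (Finset.sum_eq_zero_iff_of_nonneg h0).mp h σ hσ
  rcases mul_eq_zero.mp h2 with h3 | h3
  · exact absurd h3 (ne_of_gt hpos)
  · exact mul_self_eq_zero.mp h3

/-! ### Link lemmas -/

lemma link_faces_mem {ρ η : Finset V} :
    η ∈ (X.link ρ).faces ↔ η ∈ X.faces ∧ η ∩ ρ = ∅ ∧ ρ ∪ η ∈ X.faces := by
  simp [link]

lemma link_m (ρ η : Finset V) : (X.link ρ).m η = X.m (ρ ∪ η) := rfl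

lemma link_K0 (hX : X.IsWSC n) {ρ : Finset V} (hρ : ρ ∈ X.faces) :
    (X.link ρ).K 0 = {∅} := by
  ext η
  simp only [mem_K, link_faces_mem, Finset.card_eq_zero, Finset.mem_singleton]
  constructor
  · rintro ⟨-, rfl⟩; rfl
  · rintro rfl
    exact ⟨⟨hX.1, Finset.empty_inter ρ, by rwa [Finset.union_empty]⟩, rfl⟩

lemma card_one_inter {τ τ' : Finset V} (h : τ.card = 1) (h' : τ'.card = 1)
    (hne : τ' ≠ τ) : τ ∩ τ' = ∅ := by
  obtain ⟨a, rfl⟩ := Finset.card_eq_one.mp h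
  obtain ⟨b, rfl⟩ := Finset.card_eq_one.mp h'
  refine Finset.singleton_inter_of_notMem ?_
  simp only [Finset.mem_singleton]
  rintro rfl
  exact hne rfl

lemma union_inter_empty {s t u : Finset V} (h1 : s ∩ u = ∅) (h2 : t ∩ u = ∅) :
    (s ∪ t) ∩ u = ∅ := by
  ext x
  simp only [Finset.mem_inter, Finset.mem_union, Finset.notMem_empty, iff_false]
  intro hx
  rcases hx.1 with h | h
  · exact Finset.eq_empty_iff_forall_notMem.mp h1 x (Finset.mem_inter.mpr ⟨h, hx.2⟩)
  · exact Finset.eq_empty_iff_forall_notMem.mp h2 x (Finset.mem_inter.mpr ⟨h, hx.2⟩)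

/-- The lower walk at level 1 of a link is the constant "mean" function. -/
lemma link_Mdown_const (hX : X.IsWSC n) {ρ : Finset V} (hρ : ρ ∈ X.faces)
    (f : Finset V → ℝ) {τ : Finset V} (hτ : τ ∈ (X.link ρ).K 1) :
    (X.link ρ).Mdown 1 f τ
      = ∑ τ' ∈ (X.link ρ).K 1, ((X.link ρ).m τ' / (X.link ρ).m ∅) * f τ' := by
  have hK0 : (X.link ρ).K 0 = {∅} := link_K0 hX hρ
  unfold Mdown
  have h1 : (1 : ℕ) - 1 = 0 := rfl
  rw [h1, hK0]
  have hfilt0 : ({∅} : Finset (Finset V)).filter (fun η => η ⊆ τ) = {∅} := by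
    rw [Finset.filter_singleton, if_pos (Finset.empty_subset τ)]
  rw [hfilt0, Finset.sum_singleton]
  have hfilt : ((X.link ρ).K 1).filter
        (fun τ' => τ' ≠ τ ∧ τ ∩ τ' ∈ ({∅} : Finset (Finset V)))
      = ((X.link ρ).K 1).erase τ := by
    ext τ'
    simp only [Finset.mem_filter, Finset.mem_erase, Finset.mem_singleton]
    constructor
    · tauto
    · rintro ⟨hne, hm⟩
      exact ⟨hm, hne, card_one_inter (mem_K.mp hτ).2 (mem_K.mp hm).2 hne⟩
  rw [hfilt, ← Finset.add_sum_erase _ _ hτ]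
  push_cast
  congr 1
  · norm_num
  · refine Finset.sum_congr rfl fun τ' hτ' => ?_
    have h2 : τ ∩ τ' = ∅ :=
      card_one_inter (mem_K.mp hτ).2 (mem_K.mp (Finset.mem_of_mem_erase hτ')).2
        (Finset.ne_of_mem_erase hτ')
    rw [h2]
    norm_num

/-- The non-lazy upper walk at level 1, explicitly. -/
lemma link_Mup' (ρ : Finset V) (χ : Finset V → ℝ) (τ : Finset V) :
    (X.link ρ).Mup' 1 χ τ
      = ∑ τ' ∈ ((X.link ρ).K 1).filter (fun τ' => τ ∪ τ' ∈ (X.link ρ).K 2),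
          ((X.link ρ).m (τ ∪ τ') / (X.link ρ).m τ) * χ τ' := by
  unfold Mup' Mup
  push_cast
  rw [mul_add, Finset.mul_sum]
  have h1 : ((1:ℝ)+1)/1 * (1/(1+1) * χ τ) = χ τ := by ring
  rw [h1]
  have h2 : ∀ τ' ∈ ((X.link ρ).K 1).filter (fun τ' => τ ∪ τ' ∈ (X.link ρ).K 2),
      ((1:ℝ)+1)/1 * ((X.link ρ).m (τ ∪ τ') / ((1+1) * (X.link ρ).m τ) * χ τ')
        = (X.link ρ).m (τ ∪ τ') / (X.link ρ).m τ * χ τ' := by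
    intro τ' _
    rw [div_mul_eq_div_div_swap]
    ring
  rw [Finset.sum_congr rfl h2]
  ring

/-- Total weight of edges at a vertex of a link equals the vertex weight. -/
lemma link_edge_weight (hX : X.IsWSC n) {b : ℕ} (hbn : b + 1 ≤ n) {ρ : Finset V}
    (hρ : ρ ∈ X.K b) {τ : Finset V} (hτ : τ ∈ (X.link ρ).K 1) :
    ∑ τ' ∈ ((X.link ρ).K 1).filter (fun τ' => τ ∪ τ' ∈ (X.link ρ).K 2),
        (X.link ρ).m (τ ∪ τ') = (X.link ρ).m τ := by
  obtain ⟨hρf, hρc⟩ := mem_K.mp hρ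
  obtain ⟨hτY, hτc⟩ := mem_K.mp hτ
  obtain ⟨hτf, hτρ, hρτ⟩ := link_faces_mem.mp hτY
  have hdisρτ : Disjoint ρ τ :=
    Finset.disjoint_iff_inter_eq_empty.mpr (by rwa [Finset.inter_comm])
  have hρτK : ρ ∪ τ ∈ X.K (b+1) := mem_K.mpr
    ⟨hρτ, by rw [Finset.card_union_of_disjoint hdisρτ, hρc, hτc]⟩
  rw [link_m, m_eq_sum_covers hX hbn hρτK]
  refine Finset.sum_nbij' (fun τ' => (ρ ∪ τ) ∪ τ') (fun σ => σ \ (ρ ∪ τ))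
    ?_ ?_ ?_ ?_ ?_
  · intro τ' hτ'
    obtain ⟨hτ'1, hττ'⟩ := Finset.mem_filter.mp hτ'
    obtain ⟨hu, huc⟩ := mem_K.mp hττ'
    obtain ⟨huf, huρ, hρu⟩ := link_faces_mem.mp hu
    have hdis : Disjoint ρ (τ ∪ τ') :=
      Finset.disjoint_iff_inter_eq_empty.mpr (by rwa [Finset.inter_comm])
    refine Finset.mem_filter.mpr ⟨mem_K.mpr ⟨?_, ?_⟩, Finset.subset_union_left⟩
    · rwa [Finset.union_assoc]
    · rw [Finset.union_assoc, Finset.card_union_of_disjoint hdis, hρc, huc]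
  · intro σ hσ
    obtain ⟨hσK, hsub⟩ := Finset.mem_filter.mp hσ
    obtain ⟨hσf, hσc⟩ := mem_K.mp hσK
    have hcard : (σ \ (ρ ∪ τ)).card = 1 := by
      rw [Finset.card_sdiff_of_subset hsub, hσc, Finset.card_union_of_disjoint hdisρτ, hρc, hτc]
      omega
    have hτ'f : σ \ (ρ ∪ τ) ∈ X.faces := hd_of hX hσf (Finset.sdiff_subset)
    have hdis' : Disjoint (σ \ (ρ ∪ τ)) ρ :=
      (Finset.sdiff_disjoint).mono_right Finset.subset_union_left
    have hρσ : ρ ⊆ σ := Finset.subset_union_left.trans hsub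
    have hτσ : τ ⊆ σ := Finset.subset_union_right.trans hsub
    have hρτ' : ρ ∪ (σ \ (ρ ∪ τ)) ∈ X.faces :=
      hd_of hX hσf (Finset.union_subset hρσ Finset.sdiff_subset)
    have hdisττ' : Disjoint τ (σ \ (ρ ∪ τ)) :=
      ((Finset.sdiff_disjoint).mono_right Finset.subset_union_right).symm
    have huσ : τ ∪ (σ \ (ρ ∪ τ)) ⊆ σ :=
      Finset.union_subset hτσ Finset.sdiff_subset
    refine Finset.mem_filter.mpr ⟨mem_K.mpr ⟨link_faces_mem.mpr
      ⟨hτ'f, Finset.disjoint_iff_inter_eq_empty.mp hdis', hρτ'⟩, hcard⟩,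
      mem_K.mpr ⟨link_faces_mem.mpr ⟨hd_of hX hσf huσ, ?_, ?_⟩, ?_⟩⟩
    · exact union_inter_empty hτρ (Finset.disjoint_iff_inter_eq_empty.mp hdis')
    · rw [← Finset.union_assoc, Finset.union_sdiff_of_subset hsub]
      exact hσf
    · rw [Finset.card_union_of_disjoint hdisττ', hτc, hcard]
  · intro τ' hτ'
    obtain ⟨hτ'1, hττ'⟩ := Finset.mem_filter.mp hτ'
    obtain ⟨hτ'Y, hτ'c⟩ := mem_K.mp hτ'1
    obtain ⟨hτ'f, hτ'ρ, hρτ'⟩ := link_faces_mem.mp hτ'Y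
    have h2 : (τ ∪ τ').card = 2 := (mem_K.mp hττ').2
    have hdisττ' : Disjoint τ τ' := by
      rw [Finset.disjoint_iff_inter_eq_empty, ← Finset.card_eq_zero]
      have := Finset.card_union_add_card_inter τ τ'
      omega
    have hdis : Disjoint (ρ ∪ τ) τ' := by
      refine Finset.disjoint_union_left.mpr ⟨?_, hdisττ'⟩
      exact Finset.disjoint_iff_inter_eq_empty.mpr (by rwa [Finset.inter_comm] at hτ'ρ)
    exact Finset.union_sdiff_cancel_left hdis
  · intro σ hσ
    exact Finset.union_sdiff_of_subset (Finset.mem_filter.mp hσ).2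
  · intro τ' _
    show X.m (ρ ∪ (τ ∪ τ')) = X.m (ρ ∪ τ ∪ τ')
    rw [Finset.union_assoc]

/-- The weighted sum of a localization over link vertices is `m ρ * (d* ψ) ρ`. -/
lemma link_vertex_sum (hX : X.IsWSC n) {b : ℕ} {ρ : Finset V} (hρ : ρ ∈ X.K b)
    (ψ : Finset V → ℝ) :
    ∑ τ' ∈ (X.link ρ).K 1, (X.link ρ).m τ' * localize ψ ρ τ'
      = X.m ρ * X.dStar b ψ ρ := by
  obtain ⟨hρf, hρc⟩ := mem_K.mp hρ
  have hmρ : X.m ρ ≠ 0 := ne_of_gt (hpos_of hX hρf)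
  unfold dStar
  rw [Finset.mul_sum]
  have h1 : ∀ σ ∈ (X.K (b+1)).filter (fun σ => ρ ⊆ σ),
      X.m ρ * (X.m σ / X.m ρ * ψ σ) = X.m σ * ψ σ := fun σ _ => by field_simp
  rw [Finset.sum_congr rfl h1]
  refine Finset.sum_nbij' (fun τ' => ρ ∪ τ') (fun σ => σ \ ρ) ?_ ?_ ?_ ?_ ?_
  · intro τ' hτ'
    obtain ⟨hτ'Y, hτ'c⟩ := mem_K.mp hτ'
    obtain ⟨hτ'f, hτ'ρ, hρτ'⟩ := link_faces_mem.mp hτ'Y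
    have hdis : Disjoint ρ τ' :=
      Finset.disjoint_iff_inter_eq_empty.mpr (by rwa [Finset.inter_comm])
    exact Finset.mem_filter.mpr ⟨mem_K.mpr ⟨hρτ',
      by rw [Finset.card_union_of_disjoint hdis, hρc, hτ'c]⟩, Finset.subset_union_left⟩
  · intro σ hσ
    obtain ⟨hσK, hsub⟩ := Finset.mem_filter.mp hσ
    obtain ⟨hσf, hσc⟩ := mem_K.mp hσK
    refine mem_K.mpr ⟨link_faces_mem.mpr ⟨hd_of hX hσf Finset.sdiff_subset,
      Finset.disjoint_iff_inter_eq_empty.mp Finset.sdiff_disjoint,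
      by rw [Finset.union_sdiff_of_subset hsub]; exact hσf⟩, ?_⟩
    rw [Finset.card_sdiff_of_subset hsub, hσc, hρc]
    omega
  · intro τ' hτ'
    obtain ⟨hτ'Y, hτ'c⟩ := mem_K.mp hτ'
    obtain ⟨hτ'f, hτ'ρ, hρτ'⟩ := link_faces_mem.mp hτ'Y
    have hdis : Disjoint ρ τ' :=
      Finset.disjoint_iff_inter_eq_empty.mpr (by rwa [Finset.inter_comm])
    exact Finset.union_sdiff_cancel_left hdis
  · intro σ hσ
    exact Finset.union_sdiff_of_subset (Finset.mem_filter.mp hσ).2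
  · intro τ' _
    rfl

/-- The local quadratic form, explicitly. -/
lemma T_eq (hX : X.IsWSC n) {b : ℕ} (hbn : b + 1 ≤ n) {ρ : Finset V}
    (hρ : ρ ∈ X.K b) (ψ : Finset V → ℝ) :
    (X.link ρ).inn 1
        ((X.link ρ).Mup' 1
          (fun η => localize ψ ρ η - (X.link ρ).Mdown 1 (localize ψ ρ) η))
        (localize ψ ρ)
      = (∑ τ ∈ (X.link ρ).K 1,
          ∑ τ' ∈ ((X.link ρ).K 1).filter (fun τ' => τ ∪ τ' ∈ (X.link ρ).K 2),
            (X.link ρ).m (τ ∪ τ') * (localize ψ ρ τ * localize ψ ρ τ'))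
        - X.m ρ * (X.dStar b ψ ρ * X.dStar b ψ ρ) := by
  obtain ⟨hρf, hρc⟩ := mem_K.mp hρ
  have hmρ : X.m ρ ≠ 0 := ne_of_gt (hpos_of hX hρf)
  have hmEmp : (X.link ρ).m ∅ = X.m ρ := by
    show X.m (ρ ∪ ∅) = X.m ρ
    rw [Finset.union_empty]
  have hE : ∀ τ' ∈ (X.link ρ).K 1,
      (X.link ρ).Mdown 1 (localize ψ ρ) τ' = X.dStar b ψ ρ := by
    intro τ' hτ'
    rw [link_Mdown_const hX hρf _ hτ']
    simp_rw [div_mul_eq_mul_div, ← Finset.sum_div]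
    rw [link_vertex_sum hX hρ ψ, hmEmp, mul_div_cancel_left₀ _ hmρ]
  unfold inn
  have key : ∀ τ ∈ (X.link ρ).K 1,
      (X.link ρ).m τ * ((X.link ρ).Mup' 1
          (fun η => localize ψ ρ η - (X.link ρ).Mdown 1 (localize ψ ρ) η) τ
        * localize ψ ρ τ)
      = (∑ τ' ∈ ((X.link ρ).K 1).filter (fun τ' => τ ∪ τ' ∈ (X.link ρ).K 2),
            (X.link ρ).m (τ ∪ τ') * (localize ψ ρ τ * localize ψ ρ τ'))
        - X.dStar b ψ ρ * ((X.link ρ).m τ * localize ψ ρ τ) := by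
    intro τ hτ
    have hmτ : (X.link ρ).m τ ≠ 0 := by
      have h3 : ρ ∪ τ ∈ X.faces := (link_faces_mem.mp (mem_K.mp hτ).1).2.2
      exact ne_of_gt (hpos_of hX h3)
    rw [link_Mup']
    rw [Finset.sum_congr rfl (fun τ' hτ' => by
      rw [hE τ' (Finset.mem_of_mem_filter τ' hτ')] :
      ∀ τ' ∈ ((X.link ρ).K 1).filter (fun τ' => τ ∪ τ' ∈ (X.link ρ).K 2),
        ((X.link ρ).m (τ ∪ τ') / (X.link ρ).m τ)
            * (localize ψ ρ τ' - (X.link ρ).Mdown 1 (localize ψ ρ) τ')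
          = ((X.link ρ).m (τ ∪ τ') / (X.link ρ).m τ)
            * (localize ψ ρ τ' - X.dStar b ψ ρ))]
    rw [Finset.sum_mul, Finset.mul_sum]
    rw [Finset.sum_congr rfl (fun τ' _ => by field_simp :
      ∀ τ' ∈ ((X.link ρ).K 1).filter (fun τ' => τ ∪ τ' ∈ (X.link ρ).K 2),
        (X.link ρ).m τ * (((X.link ρ).m (τ ∪ τ') / (X.link ρ).m τ)
            * (localize ψ ρ τ' - X.dStar b ψ ρ) * localize ψ ρ τ)
          = (X.link ρ).m (τ ∪ τ') * (localize ψ ρ τ * localize ψ ρ τ')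
            - X.dStar b ψ ρ * ((X.link ρ).m (τ ∪ τ') * localize ψ ρ τ))]
    rw [Finset.sum_sub_distrib]
    congr 1
    rw [← Finset.mul_sum, ← Finset.sum_mul, link_edge_weight hX hbn hρ hτ]
  rw [Finset.sum_congr rfl key, Finset.sum_sub_distrib, ← Finset.mul_sum,
    link_vertex_sum hX hρ ψ]
  ring

lemma card_sdiff_inter (s t : Finset V) : (s \ t).card + (s ∩ t).card = s.card := by
  rw [← Finset.card_union_of_disjoint (Finset.disjoint_sdiff_inter s t),
    Finset.sdiff_union_inter]

/-- Forward combinatorial analysis for the cross-term bijection. -/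
lemma fwd (hX : X.IsWSC n) {b : ℕ} {σ τ τ' : Finset V} (hσ : σ ∈ X.K (b+2))
    (hτ : τ ∈ X.K (b+1)) (hτ' : τ' ∈ X.K (b+1)) (hτσ : τ ⊆ σ) (hτ'σ : τ' ⊆ σ)
    (hne : τ' ≠ τ) :
    τ ∩ τ' ∈ X.K b ∧ τ \ τ' ∈ (X.link (τ ∩ τ')).K 1
      ∧ τ' \ τ ∈ (X.link (τ ∩ τ')).K 1
      ∧ (τ \ τ') ∪ (τ' \ τ) ∈ (X.link (τ ∩ τ')).K 2
      ∧ (τ ∩ τ') ∪ (τ \ τ') = τ ∧ (τ ∩ τ') ∪ (τ' \ τ) = τ' ∧ τ ∪ τ' = σ := by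
  obtain ⟨hσf, hσc⟩ := mem_K.mp hσ
  obtain ⟨hτf, hτc⟩ := mem_K.mp hτ
  obtain ⟨hτ'f, hτ'c⟩ := mem_K.mp hτ'
  have huσ : τ ∪ τ' ⊆ σ := Finset.union_subset hτσ hτ'σ
  have hule : (τ ∪ τ').card ≤ b + 2 := hσc ▸ Finset.card_le_card huσ
  have hui := Finset.card_union_add_card_inter τ τ'
  have hile : (τ ∩ τ').card ≤ b := by
    by_contra hlt
    push_neg at hlt
    have h1 : τ ∩ τ' = τ :=
      Finset.eq_of_subset_of_card_le Finset.inter_subset_left (by omega)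
    have h2 : τ ⊆ τ' := h1 ▸ Finset.inter_subset_right
    exact hne (Finset.eq_of_subset_of_card_le h2 (by omega)).symm
  have hic : (τ ∩ τ').card = b := by omega
  have huc : (τ ∪ τ').card = b + 2 := by omega
  have huσ' : τ ∪ τ' = σ :=
    Finset.eq_of_subset_of_card_le huσ (by omega)
  have hsd : (τ \ τ').card = 1 := by
    have := card_sdiff_inter τ τ'
    omega
  have hsd' : (τ' \ τ).card = 1 := by
    have := card_sdiff_inter τ' τ
    rw [Finset.inter_comm] at this
    omega
  have he1 : (τ ∩ τ') ∪ (τ \ τ') = τ := by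
    ext x; simp only [Finset.mem_union, Finset.mem_inter, Finset.mem_sdiff]; tauto
  have he2 : (τ ∩ τ') ∪ (τ' \ τ) = τ' := by
    ext x; simp only [Finset.mem_union, Finset.mem_inter, Finset.mem_sdiff]; tauto
  have he3 : (τ ∩ τ') ∪ ((τ \ τ') ∪ (τ' \ τ)) = τ ∪ τ' := by
    ext x
    simp only [Finset.mem_union, Finset.mem_inter, Finset.mem_sdiff]
    by_cases h : x ∈ τ' <;> tauto
  have hiK : τ ∩ τ' ∈ X.K b :=
    mem_K.mpr ⟨hd_of hX hτf Finset.inter_subset_left, hic⟩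
  have hdis12 : Disjoint (τ \ τ') (τ' \ τ) := disjoint_sdiff_sdiff
  refine ⟨hiK, ?_, ?_, ?_, he1, he2, huσ'⟩
  · refine mem_K.mpr ⟨link_faces_mem.mpr ⟨hd_of hX hτf Finset.sdiff_subset, ?_, ?_⟩, hsd⟩
    · ext x
      simp only [Finset.mem_inter, Finset.mem_sdiff, Finset.notMem_empty, iff_false]
      tauto
    · rw [he1]; exact hτf
  · refine mem_K.mpr ⟨link_faces_mem.mpr ⟨hd_of hX hτ'f Finset.sdiff_subset, ?_, ?_⟩, hsd'⟩
    · ext x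
      simp only [Finset.mem_inter, Finset.mem_sdiff, Finset.notMem_empty, iff_false]
      tauto
    · rw [he2]; exact hτ'f
  · refine mem_K.mpr ⟨link_faces_mem.mpr ⟨?_, ?_, ?_⟩, ?_⟩
    · exact hd_of hX hσf (huσ' ▸ he3 ▸ Finset.subset_union_right)
    · ext x
      simp only [Finset.mem_inter, Finset.mem_union, Finset.mem_sdiff,
        Finset.notMem_empty, iff_false]
      tauto
    · rw [he3, huσ']; exact hσf
    · rw [Finset.card_union_of_disjoint hdis12, hsd, hsd']

/-- Backward combinatorial analysis for the cross-term bijection. -/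
lemma bwd (hX : X.IsWSC n) {b : ℕ} {ρ a a' : Finset V} (hρ : ρ ∈ X.K b)
    (ha : a ∈ (X.link ρ).K 1) (ha' : a' ∈ (X.link ρ).K 1)
    (hu : a ∪ a' ∈ (X.link ρ).K 2) :
    ρ ∪ a ∪ a' ∈ X.K (b+2) ∧ ρ ∪ a ∈ X.K (b+1) ∧ ρ ∪ a' ∈ X.K (b+1)
      ∧ ρ ∪ a ⊆ ρ ∪ a ∪ a' ∧ ρ ∪ a' ⊆ ρ ∪ a ∪ a' ∧ ρ ∪ a' ≠ ρ ∪ a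
      ∧ (ρ ∪ a) ∩ (ρ ∪ a') = ρ ∧ (ρ ∪ a) \ (ρ ∪ a') = a ∧ (ρ ∪ a') \ (ρ ∪ a) = a' := by
  obtain ⟨hρf, hρc⟩ := mem_K.mp hρ
  obtain ⟨haY, hac⟩ := mem_K.mp ha
  obtain ⟨haf, haρ, hρa⟩ := link_faces_mem.mp haY
  obtain ⟨ha'Y, ha'c⟩ := mem_K.mp ha'
  obtain ⟨ha'f, ha'ρ, hρa'⟩ := link_faces_mem.mp ha'Y
  obtain ⟨huY, huc⟩ := mem_K.mp hu
  obtain ⟨huf, huρ, hρu⟩ := link_faces_mem.mp huY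
  have hii := Finset.card_union_add_card_inter a a'
  have hint : a ∩ a' = ∅ := by
    rw [← Finset.card_eq_zero]
    omega
  have hdisρa : Disjoint ρ a :=
    Finset.disjoint_iff_inter_eq_empty.mpr (by rwa [Finset.inter_comm])
  have hdisρa' : Disjoint ρ a' :=
    Finset.disjoint_iff_inter_eq_empty.mpr (by rwa [Finset.inter_comm])
  have hdisρu : Disjoint ρ (a ∪ a') :=
    Finset.disjoint_iff_inter_eq_empty.mpr (by rwa [Finset.inter_comm])
  have hane : a ≠ a' := by
    rintro rfl
    rw [Finset.union_self] at huc
    omega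
  have hmemx : ∀ x, ¬(x ∈ a ∧ x ∈ a') := by
    intro x hx
    exact Finset.eq_empty_iff_forall_notMem.mp hint x (Finset.mem_inter.mpr hx)
  have hmemρa : ∀ x, ¬(x ∈ a ∧ x ∈ ρ) := by
    intro x hx
    exact Finset.eq_empty_iff_forall_notMem.mp haρ x (Finset.mem_inter.mpr hx)
  have hmemρa' : ∀ x, ¬(x ∈ a' ∧ x ∈ ρ) := by
    intro x hx
    exact Finset.eq_empty_iff_forall_notMem.mp ha'ρ x (Finset.mem_inter.mpr hx)
  refine ⟨?_, ?_, ?_, ?_, ?_, ?_, ?_, ?_, ?_⟩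
  · refine mem_K.mpr ⟨?_, ?_⟩
    · rwa [Finset.union_assoc]
    · rw [Finset.union_assoc, Finset.card_union_of_disjoint hdisρu, hρc, huc]
  · exact mem_K.mpr ⟨hρa, by rw [Finset.card_union_of_disjoint hdisρa, hρc, hac]⟩
  · exact mem_K.mpr ⟨hρa', by rw [Finset.card_union_of_disjoint hdisρa', hρc, ha'c]⟩
  · exact Finset.subset_union_left
  · rw [Finset.union_assoc, Finset.union_comm a a', ← Finset.union_assoc]
    exact Finset.subset_union_left
  · intro h
    apply hane
    have h1 : (ρ ∪ a) \ ρ = a := Finset.union_sdiff_cancel_left hdisρa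
    have h2 : (ρ ∪ a') \ ρ = a' := Finset.union_sdiff_cancel_left hdisρa'
    rw [← h1, ← h2, h]
  · ext x
    simp only [Finset.mem_inter, Finset.mem_union]
    have := hmemx x
    have := hmemρa x
    have := hmemρa' x
    tauto
  · ext x
    simp only [Finset.mem_sdiff, Finset.mem_union, not_or]
    have := hmemx x
    have := hmemρa x
    tauto
  · ext x
    simp only [Finset.mem_sdiff, Finset.mem_union, not_or]
    have := hmemx x
    have := hmemρa' x
    tauto

/-- The global cross-term bijection. -/
lemma cross_eq (hX : X.IsWSC n) (b : ℕ) (ψ : Finset V → ℝ) :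
    ∑ σ ∈ X.K (b+2), ∑ τ ∈ (X.K (b+1)).filter (fun τ => τ ⊆ σ),
        ∑ τ' ∈ ((X.K (b+1)).filter (fun τ => τ ⊆ σ)).erase τ, X.m σ * (ψ τ * ψ τ')
      = ∑ ρ ∈ X.K b, ∑ τ ∈ (X.link ρ).K 1,
          ∑ τ' ∈ ((X.link ρ).K 1).filter (fun τ' => τ ∪ τ' ∈ (X.link ρ).K 2),
            (X.link ρ).m (τ ∪ τ') * (localize ψ ρ τ * localize ψ ρ τ') := by
  have hL : ∑ σ ∈ X.K (b+2), ∑ τ ∈ (X.K (b+1)).filter (fun τ => τ ⊆ σ),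
        ∑ τ' ∈ ((X.K (b+1)).filter (fun τ => τ ⊆ σ)).erase τ, X.m σ * (ψ τ * ψ τ')
      = ∑ x ∈ (X.K (b+2)).sigma (fun σ =>
          ((X.K (b+1)).filter (fun τ => τ ⊆ σ)).sigma (fun τ =>
            ((X.K (b+1)).filter (fun τ => τ ⊆ σ)).erase τ)),
          X.m x.1 * (ψ x.2.1 * ψ x.2.2) := by
    rw [Finset.sum_sigma]
    exact Finset.sum_congr rfl fun σ _ => by rw [Finset.sum_sigma]
  have hR : ∑ ρ ∈ X.K b, ∑ τ ∈ (X.link ρ).K 1,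
        ∑ τ' ∈ ((X.link ρ).K 1).filter (fun τ' => τ ∪ τ' ∈ (X.link ρ).K 2),
          (X.link ρ).m (τ ∪ τ') * (localize ψ ρ τ * localize ψ ρ τ')
      = ∑ x ∈ (X.K b).sigma (fun ρ => ((X.link ρ).K 1).sigma (fun τ =>
            ((X.link ρ).K 1).filter (fun τ' => τ ∪ τ' ∈ (X.link ρ).K 2))),
          (X.link x.1).m (x.2.1 ∪ x.2.2) * (localize ψ x.1 x.2.1 * localize ψ x.1 x.2.2) := by
    rw [Finset.sum_sigma]
    exact Finset.sum_congr rfl fun ρ _ => by rw [Finset.sum_sigma]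
  rw [hL, hR]
  refine Finset.sum_nbij' (fun x => ⟨x.2.1 ∩ x.2.2, x.2.1 \ x.2.2, x.2.2 \ x.2.1⟩)
    (fun y => ⟨y.1 ∪ y.2.1 ∪ y.2.2, y.1 ∪ y.2.1, y.1 ∪ y.2.2⟩) ?_ ?_ ?_ ?_ ?_
  · rintro ⟨σ, τ, τ'⟩ hx
    simp only [Finset.mem_sigma] at hx
    obtain ⟨hσ, hτm, hτ'm⟩ := hx
    obtain ⟨hτ, hτσ⟩ := Finset.mem_filter.mp hτm
    obtain ⟨hne, hτ'm2⟩ := Finset.mem_erase.mp hτ'm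
    obtain ⟨hτ', hτ'σ⟩ := Finset.mem_filter.mp hτ'm2
    obtain ⟨h1, h2, h3, h4, -, -, -⟩ := fwd hX hσ hτ hτ' hτσ hτ'σ hne
    simp only [Finset.mem_sigma]
    exact ⟨h1, h2, Finset.mem_filter.mpr ⟨h3, h4⟩⟩
  · rintro ⟨ρ, a, a'⟩ hy
    simp only [Finset.mem_sigma] at hy
    obtain ⟨hρ, ha, ha'm⟩ := hy
    obtain ⟨ha', hu⟩ := Finset.mem_filter.mp ha'm
    obtain ⟨h1, h2, h3, h4, h5, h6, h7, -, -⟩ := bwd hX hρ ha ha' hu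
    simp only [Finset.mem_sigma]
    exact ⟨h1, Finset.mem_filter.mpr ⟨h2, h4⟩,
      Finset.mem_erase.mpr ⟨h6, Finset.mem_filter.mpr ⟨h3, h5⟩⟩⟩
  · rintro ⟨σ, τ, τ'⟩ hx
    simp only [Finset.mem_sigma] at hx
    obtain ⟨hσ, hτm, hτ'm⟩ := hx
    obtain ⟨hτ, hτσ⟩ := Finset.mem_filter.mp hτm
    obtain ⟨hne, hτ'm2⟩ := Finset.mem_erase.mp hτ'm
    obtain ⟨hτ', hτ'σ⟩ := Finset.mem_filter.mp hτ'm2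
    obtain ⟨-, -, -, -, h5, h6, h7⟩ := fwd hX hσ hτ hτ' hτσ hτ'σ hne
    show (⟨(τ ∩ τ' ∪ τ \ τ') ∪ τ' \ τ, τ ∩ τ' ∪ τ \ τ', τ ∩ τ' ∪ τ' \ τ⟩ :
        (_ : Finset V) × (_ : Finset V) × Finset V) = ⟨σ, τ, τ'⟩
    rw [h5, h6, Finset.union_sdiff_self_eq_union, h7]
  · rintro ⟨ρ, a, a'⟩ hy
    simp only [Finset.mem_sigma] at hy
    obtain ⟨hρ, ha, ha'm⟩ := hy
    obtain ⟨ha', hu⟩ := Finset.mem_filter.mp ha'm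
    obtain ⟨-, -, -, -, -, -, h7, h8, h9⟩ := bwd hX hρ ha ha' hu
    show (⟨(ρ ∪ a) ∩ (ρ ∪ a'), (ρ ∪ a) \ (ρ ∪ a'), (ρ ∪ a') \ (ρ ∪ a)⟩ :
        (_ : Finset V) × (_ : Finset V) × Finset V) = ⟨ρ, a, a'⟩
    rw [h7, h8, h9]
  · rintro ⟨σ, τ, τ'⟩ hx
    simp only [Finset.mem_sigma] at hx
    obtain ⟨hσ, hτm, hτ'm⟩ := hx
    obtain ⟨hτ, hτσ⟩ := Finset.mem_filter.mp hτm
    obtain ⟨hne, hτ'm2⟩ := Finset.mem_erase.mp hτ'm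
    obtain ⟨hτ', hτ'σ⟩ := Finset.mem_filter.mp hτ'm2
    obtain ⟨-, -, -, -, h5, h6, h7⟩ := fwd hX hσ hτ hτ' hτσ hτ'σ hne
    show X.m σ * (ψ τ * ψ τ')
      = X.m (τ ∩ τ' ∪ (τ \ τ' ∪ τ' \ τ)) * (ψ (τ ∩ τ' ∪ τ \ τ') * ψ (τ ∩ τ' ∪ τ' \ τ))
    rw [h5, h6, ← Finset.union_assoc, h5, Finset.union_sdiff_self_eq_union, h7]

/-- **Master identity**. -/
lemma master (hX : X.IsWSC n) {b : ℕ} (hbn : b + 1 ≤ n) (ψ : Finset V → ℝ) :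
    X.normSq (b+2) (X.d (b+1) ψ)
      = X.normSq (b+1) ψ
        + (∑ ρ ∈ X.K b, (X.link ρ).inn 1
            ((X.link ρ).Mup' 1
              (fun η => localize ψ ρ η - (X.link ρ).Mdown 1 (localize ψ ρ) η))
            (localize ψ ρ))
        + X.normSq b (X.dStar b ψ) := by
  have expand : X.normSq (b+2) (X.d (b+1) ψ)
      = (∑ σ ∈ X.K (b+2), ∑ τ ∈ (X.K (b+1)).filter (fun τ => τ ⊆ σ),
            X.m σ * (ψ τ * ψ τ))
        + ∑ σ ∈ X.K (b+2), ∑ τ ∈ (X.K (b+1)).filter (fun τ => τ ⊆ σ),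
            ∑ τ' ∈ ((X.K (b+1)).filter (fun τ => τ ⊆ σ)).erase τ,
              X.m σ * (ψ τ * ψ τ') := by
    unfold normSq inn d
    rw [← Finset.sum_add_distrib]
    refine Finset.sum_congr rfl fun σ _ => ?_
    rw [Finset.sum_mul_sum, Finset.mul_sum, ← Finset.sum_add_distrib]
    refine Finset.sum_congr rfl fun τ hτ => ?_
    rw [Finset.mul_sum]
    exact (Finset.add_sum_erase _ _ hτ).symm
  have diag : ∑ σ ∈ X.K (b+2), ∑ τ ∈ (X.K (b+1)).filter (fun τ => τ ⊆ σ),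
        X.m σ * (ψ τ * ψ τ) = X.normSq (b+1) ψ := by
    rw [sum_swap_rel (X.K (b+2)) (X.K (b+1)) (fun a b => b ⊆ a)
      (fun σ τ => X.m σ * (ψ τ * ψ τ))]
    refine Finset.sum_congr rfl fun τ hτ => ?_
    rw [← Finset.sum_mul, ← m_eq_sum_covers hX hbn hτ]
  have hT : ∑ ρ ∈ X.K b, (X.link ρ).inn 1
        ((X.link ρ).Mup' 1
          (fun η => localize ψ ρ η - (X.link ρ).Mdown 1 (localize ψ ρ) η))
        (localize ψ ρ)
      = (∑ ρ ∈ X.K b, ∑ τ ∈ (X.link ρ).K 1,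
          ∑ τ' ∈ ((X.link ρ).K 1).filter (fun τ' => τ ∪ τ' ∈ (X.link ρ).K 2),
            (X.link ρ).m (τ ∪ τ') * (localize ψ ρ τ * localize ψ ρ τ'))
        - ∑ ρ ∈ X.K b, X.m ρ * (X.dStar b ψ ρ * X.dStar b ψ ρ) := by
    rw [← Finset.sum_sub_distrib]
    exact Finset.sum_congr rfl fun ρ hρ => T_eq hX hbn hρ ψ
  have hN : X.normSq b (X.dStar b ψ)
      = ∑ ρ ∈ X.K b, X.m ρ * (X.dStar b ψ ρ * X.dStar b ψ ρ) := rfl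
  rw [expand, diag, cross_eq hX b ψ, hT, hN]
  ring

/-! ### Step lemmas for the recursive construction -/

lemma hah (hX : X.IsWSC n) (c : ℕ) (ψ : Finset V → ℝ) :
    (X.normSq c (X.dStar c ψ) / X.normSq (c+1) (X.d c (X.dStar c ψ)))
        * X.normSq (c+1) (X.d c (X.dStar c ψ))
      = X.normSq c (X.dStar c ψ) := by
  by_cases h0 : X.normSq (c+1) (X.d c (X.dStar c ψ)) = 0
  · rw [h0, mul_zero]
    have hv := vanish_of_normSq_eq_zero hX h0
    have h1 : X.normSq c (X.dStar c ψ) = X.inn (c+1) (X.d c (X.dStar c ψ)) ψ :=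
      (inn_d_eq hX c _ ψ).symm
    rw [h1]
    exact (Finset.sum_eq_zero fun σ hσ => by rw [hv σ hσ]; ring).symm
  · exact div_mul_cancel₀ _ h0

lemma step_norm_d (hX : X.IsWSC n) (c : ℕ) (ψ : Finset V → ℝ) :
    X.normSq (c+1) (X.d c (fun σ =>
        Real.sqrt (X.normSq c (X.dStar c ψ) / X.normSq (c+1) (X.d c (X.dStar c ψ)))
          * X.dStar c ψ σ))
      = X.normSq c (X.dStar c ψ) := by
  rw [d_smul, normSq_smul,
    Real.sq_sqrt (div_nonneg (normSq_nonneg hX _ _) (normSq_nonneg hX _ _)),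
    hah hX c ψ]

lemma step_norm_f (hX : X.IsWSC n) (c : ℕ) (ψ : Finset V → ℝ) :
    X.normSq (c+1) (fun σ => ψ σ -
        (X.normSq c (X.dStar c ψ) / X.normSq (c+1) (X.d c (X.dStar c ψ)))
          * X.d c (X.dStar c ψ) σ)
      = X.normSq (c+1) ψ
        - X.normSq c (fun σ =>
            Real.sqrt (X.normSq c (X.dStar c ψ) / X.normSq (c+1) (X.d c (X.dStar c ψ)))
              * X.dStar c ψ σ) := by
  have hinn : X.inn (c+1) (X.d c (X.dStar c ψ)) ψ = X.normSq c (X.dStar c ψ) :=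
    inn_d_eq hX c _ ψ
  have h1 : X.normSq c (fun σ =>
        Real.sqrt (X.normSq c (X.dStar c ψ) / X.normSq (c+1) (X.d c (X.dStar c ψ)))
          * X.dStar c ψ σ)
      = (X.normSq c (X.dStar c ψ) / X.normSq (c+1) (X.d c (X.dStar c ψ)))
          * X.normSq c (X.dStar c ψ) := by
    rw [normSq_smul,
      Real.sq_sqrt (div_nonneg (normSq_nonneg hX _ _) (normSq_nonneg hX _ _))]
  have h2 := hah hX c ψ
  have expand : X.normSq (c+1) (fun σ => ψ σ -
        (X.normSq c (X.dStar c ψ) / X.normSq (c+1) (X.d c (X.dStar c ψ)))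
          * X.d c (X.dStar c ψ) σ)
      = X.normSq (c+1) ψ
        - 2 * (X.normSq c (X.dStar c ψ) / X.normSq (c+1) (X.d c (X.dStar c ψ)))
          * X.inn (c+1) (X.d c (X.dStar c ψ)) ψ
        + (X.normSq c (X.dStar c ψ) / X.normSq (c+1) (X.d c (X.dStar c ψ)))
          * ((X.normSq c (X.dStar c ψ) / X.normSq (c+1) (X.d c (X.dStar c ψ)))
            * X.normSq (c+1) (X.d c (X.dStar c ψ))) := by
    unfold normSq inn
    simp only [Finset.mul_sum]
    rw [← Finset.sum_sub_distrib, ← Finset.sum_add_distrib]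
    exact Finset.sum_congr rfl fun σ _ => by ring
  rw [expand, hinn, h1, h2]
  ring

lemma cz_dStar (hX : X.IsWSC n) (c : ℕ) {ψ : Finset V → ℝ}
    (hψ : X.cochainZero (c+1) ψ) :
    ∑ τ ∈ X.K c, X.m τ * X.dStar c ψ τ = 0 := by
  rw [sum_m_dStar hX c ψ]
  unfold cochainZero at hψ
  rw [hψ, mul_zero]

lemma normSq_dStar_zero (hX : X.IsWSC n) {ψ : Finset V → ℝ}
    (hψ : X.cochainZero 1 ψ) : X.normSq 0 (X.dStar 0 ψ) = 0 := by
  have hK0 : X.K 0 = {∅} := by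
    ext σ
    simp only [mem_K, Finset.card_eq_zero, Finset.mem_singleton]
    exact ⟨fun h => h.2, fun h => ⟨h ▸ hX.1, h⟩⟩
  have hz : X.dStar 0 ψ ∅ = 0 := by
    unfold dStar
    have hfilt : (X.K 1).filter (fun σ => ∅ ⊆ σ) = X.K 1 :=
      Finset.filter_true_of_mem (fun _ _ => Finset.empty_subset _)
    rw [hfilt]
    simp_rw [div_mul_eq_mul_div, ← Finset.sum_div]
    unfold cochainZero at hψ
    rw [hψ, zero_div]
  unfold normSq inn
  rw [hK0, Finset.sum_singleton, hz]
  ring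

/-- The recursively defined sequence `g_{k-j}`. -/
def dec (X : WSC V) (k : ℕ) (φ : Finset V → ℝ) : ℕ → Finset V → ℝ
  | 0 => φ
  | j+1 =>
    let h := X.dStar (k - j) (dec X k φ j)
    fun σ => Real.sqrt (X.normSq (k - j) h / X.normSq (k - j + 1) (X.d (k - j) h))
      * h σ

end WSCAux

open WSCAux

/-- **Decomposition Theorem.** For every `0 ≤ k ≤ n-1` and every
`φ ∈ C^k_0(X,ℝ)` there are `φ^i ∈ C^i_0(X,ℝ)` (`0 ≤ i ≤ k`, here `f i`) and
`(φ^i)' ∈ C^i_0(X,ℝ)` (here `g i`, with `(φ^k)' = φ`) such that: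
(1) for every `0 ≤ i ≤ k`, `‖(φ^i)'‖² = ‖φ^i‖² + ... + ‖φ^0‖²`; and
(2) `‖dφ‖² = Σ_{i=0}^{k} (k+1-i) ‖φ^i‖²
      + Σ_{i=0}^{k} Σ_{τ ∈ X(i-1)} ⟨(M')⁺_{τ,0}(I - M⁻_{τ,0})(φ^i)'_τ, (φ^i)'_τ⟩`. -/
theorem decomposition_theorem {V : Type*} [DecidableEq V] (X : WSC V) (n : ℕ)
    (hX : X.IsWSC n) (k : ℕ) (hk : k < n) (φ : Finset V → ℝ)
    (hφ : X.cochainZero (k + 1) φ) :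
    ∃ f g : ℕ → Finset V → ℝ,
      g k = φ ∧
      (∀ i ≤ k, X.cochainZero (i + 1) (f i)) ∧
      (∀ i ≤ k, X.cochainZero (i + 1) (g i)) ∧
      (∀ i ≤ k, X.normSq (i + 1) (g i) =
        ∑ j ∈ Finset.range (i + 1), X.normSq (j + 1) (f j)) ∧
      X.normSq (k + 2) (X.d (k + 1) φ) =
        (∑ i ∈ Finset.range (k + 1), ((k : ℝ) + 1 - (i : ℝ)) * X.normSq (i + 1) (f i)) +
        ∑ i ∈ Finset.range (k + 1), ∑ τ ∈ X.K i,
          (X.link τ).inn 1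
            ((X.link τ).Mup' 1
              (fun η => localize (g i) τ η - (X.link τ).Mdown 1 (localize (g i) τ) η))
            (localize (g i) τ) := by
  classical
  -- the decomposition sequences
  set G : ℕ → Finset V → ℝ := fun i => WSCAux.dec X k φ (k - i) with hG
  set F : ℕ → Finset V → ℝ := fun i σ => G i σ -
      (X.normSq i (X.dStar i (G i)) / X.normSq (i+1) (X.d i (X.dStar i (G i))))
        * X.d i (X.dStar i (G i)) σ with hF
  have hdec0 : WSCAux.dec X k φ 0 = φ := rfl
  have hGk : G k = φ := by
    rw [hG]
    show WSCAux.dec X k φ (k - k) = φ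
    rw [Nat.sub_self, hdec0]
  -- the step relation
  have hstep : ∀ i < k, G i = fun σ =>
      Real.sqrt (X.normSq (i+1) (X.dStar (i+1) (G (i+1))) /
          X.normSq (i+1+1) (X.d (i+1) (X.dStar (i+1) (G (i+1)))))
        * X.dStar (i+1) (G (i+1)) σ := by
    intro i hi
    rw [hG]
    show WSCAux.dec X k φ (k - i) = _
    have e0 : k - i = (k - (i+1)) + 1 := by omega
    rw [e0]
    have hdecs : WSCAux.dec X k φ ((k - (i+1)) + 1) = fun σ =>
        Real.sqrt (X.normSq (k - (k - (i+1)))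
            (X.dStar (k - (k - (i+1))) (WSCAux.dec X k φ (k - (i+1)))) /
          X.normSq (k - (k - (i+1)) + 1)
            (X.d (k - (k - (i+1)))
              (X.dStar (k - (k - (i+1))) (WSCAux.dec X k φ (k - (i+1))))))
          * X.dStar (k - (k - (i+1))) (WSCAux.dec X k φ (k - (i+1))) σ := rfl
    rw [hdecs]
    have e1 : k - (k - (i+1)) = i + 1 := by omega
    rw [e1]
  -- cochainZero for the g's
  have hA : ∀ j ≤ k, X.cochainZero (k - j + 1) (WSCAux.dec X k φ j) := by
    intro j
    induction j with
    | zero =>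
      intro _
      exact hφ
    | succ j ih =>
      intro hj
      have ihh := ih (by omega)
      have hdecs : WSCAux.dec X k φ (j + 1) = fun σ =>
          Real.sqrt (X.normSq (k - j) (X.dStar (k - j) (WSCAux.dec X k φ j)) /
            X.normSq (k - j + 1)
              (X.d (k - j) (X.dStar (k - j) (WSCAux.dec X k φ j))))
            * X.dStar (k - j) (WSCAux.dec X k φ j) σ := rfl
      have e : k - (j + 1) + 1 = k - j := by omega
      rw [e, hdecs]
      unfold cochainZero
      rw [Finset.sum_congr rfl (fun σ _ => by ring :
        ∀ σ ∈ X.K (k - j), X.m σ *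
            (Real.sqrt (X.normSq (k - j) (X.dStar (k - j) (WSCAux.dec X k φ j)) /
              X.normSq (k - j + 1)
                (X.d (k - j) (X.dStar (k - j) (WSCAux.dec X k φ j))))
              * X.dStar (k - j) (WSCAux.dec X k φ j) σ)
          = Real.sqrt (X.normSq (k - j) (X.dStar (k - j) (WSCAux.dec X k φ j)) /
              X.normSq (k - j + 1)
                (X.d (k - j) (X.dStar (k - j) (WSCAux.dec X k φ j))))
            * (X.m σ * X.dStar (k - j) (WSCAux.dec X k φ j) σ)),
        ← Finset.mul_sum, WSCAux.cz_dStar hX (k - j) ihh, mul_zero]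
  have hgz : ∀ i ≤ k, X.cochainZero (i + 1) (G i) := by
    intro i hi
    have h1 := hA (k - i) (by omega)
    rw [show k - (k - i) = i from by omega] at h1
    exact h1
  -- cochainZero for the f's
  have hfz : ∀ i ≤ k, X.cochainZero (i + 1) (F i) := by
    intro i hi
    unfold cochainZero
    rw [hF]
    rw [Finset.sum_congr rfl (fun σ _ => by ring :
      ∀ σ ∈ X.K (i + 1), X.m σ * (G i σ -
          (X.normSq i (X.dStar i (G i)) / X.normSq (i+1) (X.d i (X.dStar i (G i))))
            * X.d i (X.dStar i (G i)) σ)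
        = X.m σ * G i σ -
          (X.normSq i (X.dStar i (G i)) / X.normSq (i+1) (X.d i (X.dStar i (G i))))
            * (X.m σ * X.d i (X.dStar i (G i)) σ)),
      Finset.sum_sub_distrib, ← Finset.mul_sum, hgz i hi,
      WSCAux.sum_m_d hX (by omega : i ≤ n), WSCAux.cz_dStar hX i (hgz i hi),
      mul_zero, sub_zero]
  -- norm recursion (condition (1))
  have hB : ∀ i ≤ k, X.normSq (i + 1) (G i)
      = ∑ j ∈ Finset.range (i + 1), X.normSq (j + 1) (F j) := by
    intro i
    induction i with
    | zero =>
      intro _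
      rw [Finset.sum_range_one]
      have hsf := WSCAux.step_norm_f hX 0 (G 0)
      have hz : X.normSq 0 (fun σ =>
          Real.sqrt (X.normSq 0 (X.dStar 0 (G 0)) /
              X.normSq (0+1) (X.d 0 (X.dStar 0 (G 0))))
            * X.dStar 0 (G 0) σ) = 0 := by
        rw [WSCAux.normSq_smul, WSCAux.normSq_dStar_zero hX (hgz 0 (by omega)),
          mul_zero]
      rw [hz, sub_zero] at hsf
      exact hsf.symm
    | succ i ih =>
      intro hi
      have ihh := ih (by omega)
      have hsf := WSCAux.step_norm_f hX (i+1) (G (i+1))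
      rw [← hstep i (by omega)] at hsf
      have hFs : F (i+1) = fun σ => G (i+1) σ -
          X.normSq (i+1) (X.dStar (i+1) (G (i+1))) /
              X.normSq (i+1+1) (X.d (i+1) (X.dStar (i+1) (G (i+1)))) *
            X.d (i+1) (X.dStar (i+1) (G (i+1))) σ := rfl
      rw [Finset.sum_range_succ, ← ihh, hFs, hsf]
      ring
  -- the telescoping identity (condition (2))
  have hP : ∀ i ≤ k, X.normSq (i + 2) (X.d (i + 1) (G i))
      = (∑ j ∈ Finset.range (i + 1), X.normSq (j + 1) (G j))
        + ∑ j ∈ Finset.range (i + 1), ∑ τ ∈ X.K j,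
            (X.link τ).inn 1
              ((X.link τ).Mup' 1
                (fun η => localize (G j) τ η - (X.link τ).Mdown 1 (localize (G j) τ) η))
              (localize (G j) τ) := by
    intro i
    induction i with
    | zero =>
      intro _
      rw [WSCAux.master hX (by omega : 0 + 1 ≤ n) (G 0),
        WSCAux.normSq_dStar_zero hX (hgz 0 (by omega)), Finset.sum_range_one,
        Finset.sum_range_one, add_zero]
    | succ i ih =>
      intro hi
      have ihh := ih (by omega)
      have hsd := WSCAux.step_norm_d hX (i+1) (G (i+1))
      rw [← hstep i (by omega)] at hsd
      rw [Finset.sum_range_succ (fun j => X.normSq (j + 1) (G j)) (i+1),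
        Finset.sum_range_succ (fun j => ∑ τ ∈ X.K j,
          (X.link τ).inn 1
            ((X.link τ).Mup' 1
              (fun η => localize (G j) τ η - (X.link τ).Mdown 1 (localize (G j) τ) η))
            (localize (G j) τ)) (i+1),
        WSCAux.master hX (by omega : (i+1) + 1 ≤ n) (G (i+1)), ← hsd,
        show (i:ℕ)+1+1 = i+2 from rfl, ihh]
      ring
  -- the coefficient identity
  have hswap : ∑ j ∈ Finset.range (k + 1), X.normSq (j + 1) (G j)
      = ∑ i ∈ Finset.range (k + 1), ((k : ℝ) + 1 - (i : ℝ)) * X.normSq (i + 1) (F i) := by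
    rw [Finset.sum_congr rfl (fun j hj => hB j (by
      have := Finset.mem_range.mp hj; omega))]
    rw [Finset.sum_congr rfl (fun j (hj : j ∈ Finset.range (k+1)) =>
      (Finset.sum_congr (by
        ext l
        simp only [Finset.mem_range, Finset.mem_filter]
        have := Finset.mem_range.mp hj
        omega) (fun _ _ => rfl) :
        ∑ l ∈ Finset.range (j + 1), X.normSq (l + 1) (F l)
          = ∑ l ∈ (Finset.range (k+1)).filter (fun l => l ≤ j),
              X.normSq (l + 1) (F l)))]
    rw [Finset.sum_comm' (s := Finset.range (k+1))
      (t := fun j => (Finset.range (k+1)).filter (fun l => l ≤ j))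
      (t' := Finset.range (k+1))
      (s' := fun l => (Finset.range (k+1)).filter (fun j => l ≤ j))
      (by intro a b; simp only [Finset.mem_filter]; tauto)]
    refine Finset.sum_congr rfl fun l hl => ?_
    rw [Finset.sum_const]
    have hcard : ((Finset.range (k+1)).filter (fun j => l ≤ j)).card = k + 1 - l := by
      rw [show (Finset.range (k+1)).filter (fun j => l ≤ j) = Finset.Ico l (k+1) by
        ext j
        simp only [Finset.mem_filter, Finset.mem_range, Finset.mem_Ico]
        omega]
      rw [Nat.card_Ico]
    rw [hcard, nsmul_eq_mul]
    have hlk := Finset.mem_range.mp hl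
    congr 1
    push_cast [Nat.cast_sub (by omega : l ≤ k + 1)]
    ring
  refine ⟨F, G, hGk, hfz, hgz, hB, ?_⟩
  have hPk := hP k le_rfl
  rw [hGk] at hPk
  calc X.normSq (k + 2) (X.d (k + 1) φ)
      = (∑ j ∈ Finset.range (k + 1), X.normSq (j + 1) (G j))
        + ∑ j ∈ Finset.range (k + 1), ∑ τ ∈ X.K j,
            (X.link τ).inn 1
              ((X.link τ).Mup' 1
                (fun η => localize (G j) τ η - (X.link τ).Mdown 1 (localize (G j) τ) η))
              (localize (G j) τ) := hPk
    _ = _ := by rw [hswap]
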